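/- Let {D_j^λ}_{j} be a Hermitian orthonormal basis of a nontrivial (traceless) irrep V_λ ⊂ L(C^d) of dimension d_λ. For a Haar-random pure state |ψ_H⟩, the expected GFD purity satisfies E[P_λ(|ψ_H⟩⟨ψ_H|)] = d_λ/(d(d+1)); for the one-dimensional trivial irrep spanned by I/√d, E[P_λ(|ψ_H⟩⟨ψ_H|)] = 1/d. -/

import Mathlib

/-!
STATEMENT 4: For a Hermitian orthonormal basis `{D_j}_{j=1}^{d_λ}` of a nontrivial
(traceless) irrep `V_λ ⊂ L(ℂ^d)` and a Haar-random pure state `|ψ_H⟩`,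
`E[P_λ(|ψ_H⟩⟨ψ_H|)] = d_λ/(d(d+1))`; for the trivial irrep spanned by `I/√d`,
the expected purity is `1/d`.
-/

open Matrix MeasureTheory

/-- Rank-one projector `|ψ⟩⟨ψ|`. -/
noncomputable def outerProj {d : ℕ} (ψ : Fin d → ℂ) : Matrix (Fin d) (Fin d) ℂ :=
  Matrix.of fun i j => ψ i * (starRingEnd ℂ) (ψ j)

/-- GFD purity of `A` w.r.t. the Hermitian orthonormal family `D`. -/
noncomputable def gfdPurity {d dl : ℕ} (D : Fin dl → Matrix (Fin d) (Fin d) ℂ)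
    (A : Matrix (Fin d) (Fin d) ℂ) : ℝ :=
  ∑ j, Complex.normSq ((D j * A).trace)

noncomputable instance matrixMeasurableSpace {d : ℕ} : MeasurableSpace (Matrix (Fin d) (Fin d) ℂ) :=
  inferInstanceAs (MeasurableSpace ((Fin d) → (Fin d) → ℂ))

noncomputable def psiH {d : ℕ} (ψ₀ : Fin d → ℂ) (U : Matrix.unitaryGroup (Fin d) ℂ) : Fin d → ℂ :=
  (U : Matrix (Fin d) (Fin d) ℂ).mulVec ψ₀

section setup
variable {d : ℕ} (ψ₀ : Fin d → ℂ)

lemma measurable_entry (i j : Fin d) :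
    Measurable (fun U : Matrix.unitaryGroup (Fin d) ℂ => (U : Matrix (Fin d) (Fin d) ℂ) i j) :=
  (measurable_pi_apply j).comp ((measurable_pi_apply i).comp measurable_subtype_coe)

lemma measurable_psi (i : Fin d) : Measurable (fun U => psiH ψ₀ U i) := by
  have h : (fun U : Matrix.unitaryGroup (Fin d) ℂ => psiH ψ₀ U i)
      = fun U : Matrix.unitaryGroup (Fin d) ℂ => ∑ k, (U : Matrix (Fin d) (Fin d) ℂ) i k * ψ₀ k := by
    funext U; simp [psiH, Matrix.mulVec, dotProduct]
  rw [h]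
  exact Finset.measurable_sum _ (fun k _ => (measurable_entry i k).mul measurable_const)

lemma psi_norm_c (hψ₀ : ∑ i, Complex.normSq (ψ₀ i) = 1) (U : Matrix.unitaryGroup (Fin d) ℂ) :
    ∑ i, psiH ψ₀ U i * (starRingEnd ℂ) (psiH ψ₀ U i) = 1 := by
  have hU : (U : Matrix (Fin d) (Fin d) ℂ)ᴴ * (U : Matrix (Fin d) (Fin d) ℂ) = 1 := by
    have := (Unitary.mem_iff.mp U.2).1
    rwa [Matrix.star_eq_conjTranspose] at this
  have key : star (psiH ψ₀ U) ⬝ᵥ (psiH ψ₀ U) = star ψ₀ ⬝ᵥ ψ₀ := by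
    unfold psiH
    rw [Matrix.star_mulVec, Matrix.dotProduct_mulVec, Matrix.vecMul_vecMul, hU,
      Matrix.vecMul_one]
  have e1 : ∑ i, psiH ψ₀ U i * (starRingEnd ℂ) (psiH ψ₀ U i) = star (psiH ψ₀ U) ⬝ᵥ (psiH ψ₀ U) := by
    simp [dotProduct, Pi.star_apply, mul_comm, Complex.star_def]
  have e2 : star ψ₀ ⬝ᵥ ψ₀ = 1 := by
    have : ∀ k, (starRingEnd ℂ) (ψ₀ k) * ψ₀ k = (Complex.normSq (ψ₀ k) : ℂ) := by
      intro k; rw [mul_comm, Complex.mul_conj]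
    simp only [dotProduct, Pi.star_apply, Complex.star_def, this]
    rw [← Complex.ofReal_sum, hψ₀, Complex.ofReal_one]
  rw [e1, key, e2]

lemma psi_norm (hψ₀ : ∑ i, Complex.normSq (ψ₀ i) = 1) (U : Matrix.unitaryGroup (Fin d) ℂ) :
    ∑ i, Complex.normSq (psiH ψ₀ U i) = 1 := by
  have h := psi_norm_c ψ₀ hψ₀ U
  simp only [Complex.mul_conj] at h
  rw [← Complex.ofReal_sum] at h
  exact_mod_cast h

lemma psi_abs_le (hψ₀ : ∑ i, Complex.normSq (ψ₀ i) = 1) (U : Matrix.unitaryGroup (Fin d) ℂ)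
    (i : Fin d) : ‖psiH ψ₀ U i‖ ≤ 1 := by
  have h := psi_norm ψ₀ hψ₀ U
  have h1 : Complex.normSq (psiH ψ₀ U i) ≤ 1 := by
    rw [← h]
    exact Finset.single_le_sum (fun k _ => Complex.normSq_nonneg _) (Finset.mem_univ i)
  have h2 : ‖psiH ψ₀ U i‖ ^ 2 ≤ 1 := by
    rwa [Complex.sq_norm]
  nlinarith [norm_nonneg (psiH ψ₀ U i)]
end setup

noncomputable def Mmom {d : ℕ} (μ : Measure (Matrix.unitaryGroup (Fin d) ℂ)) (ψ₀ : Fin d → ℂ)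
    (i j k l : Fin d) : ℂ :=
  ∫ U, psiH ψ₀ U i * (starRingEnd ℂ) (psiH ψ₀ U j) *
      (psiH ψ₀ U k * (starRingEnd ℂ) (psiH ψ₀ U l)) ∂μ

section moments
variable {d : ℕ} (μ : Measure (Matrix.unitaryGroup (Fin d) ℂ)) [IsProbabilityMeasure μ]
  (ψ₀ : Fin d → ℂ) (hψ₀ : ∑ i, Complex.normSq (ψ₀ i) = 1)

lemma measurable_conj_psi (j : Fin d) :
    Measurable (fun U => (starRingEnd ℂ) (psiH ψ₀ U j)) := by
  simp only [starRingEnd_apply]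
  exact continuous_star.measurable.comp (measurable_psi ψ₀ j)

lemma measurable_integrand (i j k l : Fin d) :
    Measurable (fun U => psiH ψ₀ U i * (starRingEnd ℂ) (psiH ψ₀ U j) *
      (psiH ψ₀ U k * (starRingEnd ℂ) (psiH ψ₀ U l))) :=
  (((measurable_psi ψ₀ i).mul (measurable_conj_psi ψ₀ j)).mul
    ((measurable_psi ψ₀ k).mul (measurable_conj_psi ψ₀ l)))

include hψ₀ in
lemma integrable_integrand (i j k l : Fin d) :
    Integrable (fun U => psiH ψ₀ U i * (starRingEnd ℂ) (psiH ψ₀ U j) *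
      (psiH ψ₀ U k * (starRingEnd ℂ) (psiH ψ₀ U l))) μ := by
  refine Integrable.mono' (integrable_const 1) (measurable_integrand ψ₀ i j k l).aestronglyMeasurable ?_
  refine Filter.Eventually.of_forall fun U => ?_
  have h := psi_abs_le ψ₀ hψ₀ U
  have n : ∀ m, (0:ℝ) ≤ ‖psiH ψ₀ U m‖ := fun m => norm_nonneg _
  calc ‖psiH ψ₀ U i * (starRingEnd ℂ) (psiH ψ₀ U j) *
      (psiH ψ₀ U k * (starRingEnd ℂ) (psiH ψ₀ U l))‖
      = ‖psiH ψ₀ U i‖ * ‖psiH ψ₀ U j‖ * (‖psiH ψ₀ U k‖ * ‖psiH ψ₀ U l‖) := by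
        simp [norm_mul, RCLike.norm_conj]
    _ ≤ 1 := by
        have h1 : ‖psiH ψ₀ U i‖ * ‖psiH ψ₀ U j‖ ≤ 1 := mul_le_one₀ (h i) (n j) (h j)
        have h2 : ‖psiH ψ₀ U k‖ * ‖psiH ψ₀ U l‖ ≤ 1 := mul_le_one₀ (h k) (n l) (h l)
        exact mul_le_one₀ h1 (mul_nonneg (n k) (n l)) h2

lemma int_cmul (z : ℂ) (g : Matrix.unitaryGroup (Fin d) ℂ → ℂ) :
    ∫ U, z * g U ∂μ = z * ∫ U, g U ∂μ := by
  simpa [smul_eq_mul] using integral_smul z g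

include hψ₀ in
lemma integral_quad (c : Fin d → Fin d → Fin d → Fin d → ℂ) :
    ∫ U, (∑ a, ∑ b, ∑ f, ∑ e, c a b f e * (psiH ψ₀ U a * (starRingEnd ℂ) (psiH ψ₀ U b) *
        (psiH ψ₀ U f * (starRingEnd ℂ) (psiH ψ₀ U e)))) ∂μ
    = ∑ a, ∑ b, ∑ f, ∑ e, c a b f e * Mmom μ ψ₀ a b f e := by
  rw [integral_finset_sum]
  · refine Finset.sum_congr rfl fun a _ => ?_
    rw [integral_finset_sum]
    · refine Finset.sum_congr rfl fun b _ => ?_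
      rw [integral_finset_sum]
      · refine Finset.sum_congr rfl fun f _ => ?_
        rw [integral_finset_sum]
        · exact Finset.sum_congr rfl fun e _ => int_cmul μ _ _
        · exact fun e _ => (integrable_integrand μ ψ₀ hψ₀ a b f e).const_mul _
      · exact fun f _ => (integrable_finset_sum _ fun e _ =>
          (integrable_integrand μ ψ₀ hψ₀ a b f e).const_mul _)
    · exact fun b _ => (integrable_finset_sum _ fun f _ => integrable_finset_sum _ fun e _ =>
        (integrable_integrand μ ψ₀ hψ₀ a b f e).const_mul _)
  · exact fun a _ => (integrable_finset_sum _ fun b _ => integrable_finset_sum _ fun f _ =>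
      integrable_finset_sum _ fun e _ => (integrable_integrand μ ψ₀ hψ₀ a b f e).const_mul _)
end moments

set_option linter.unusedSectionVars false

lemma sum4_rev {d : ℕ} (g : Fin d → Fin d → Fin d → Fin d → ℂ) :
    ∑ a, ∑ b, ∑ c, ∑ e, g a b c e = ∑ a, ∑ b, ∑ c, ∑ e, g e c b a := by
  have h := Fintype.sum_equiv
    (⟨fun x : Fin d × Fin d × Fin d × Fin d => (x.2.2.2, x.2.2.1, x.2.1, x.1),
      fun x => (x.2.2.2, x.2.2.1, x.2.1, x.1), fun x => rfl, fun x => rfl⟩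
      : (Fin d × Fin d × Fin d × Fin d) ≃ (Fin d × Fin d × Fin d × Fin d))
    (fun x : Fin d × Fin d × Fin d × Fin d => g x.1 x.2.1 x.2.2.1 x.2.2.2)
    (fun x : Fin d × Fin d × Fin d × Fin d => g x.2.2.2 x.2.2.1 x.2.1 x.1) (fun x => rfl)
  simpa [Fintype.sum_prod_type] using h

section inv
variable {d : ℕ} (μ : Measure (Matrix.unitaryGroup (Fin d) ℂ)) [IsProbabilityMeasure μ]
  (ψ₀ : Fin d → ℂ) (hψ₀ : ∑ i, Complex.normSq (ψ₀ i) = 1)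
  (hinv : ∀ U : Matrix.unitaryGroup (Fin d) ℂ, μ.map (fun V => U * V) = μ)

lemma measurable_lmul (W : Matrix.unitaryGroup (Fin d) ℂ) :
    Measurable (fun U : Matrix.unitaryGroup (Fin d) ℂ => W * U) := by
  have h : Measurable (fun U : Matrix.unitaryGroup (Fin d) ℂ =>
      (W : Matrix (Fin d) (Fin d) ℂ) * (U : Matrix (Fin d) (Fin d) ℂ)) := by
    apply measurable_pi_lambda
    intro i
    apply measurable_pi_lambda
    intro j
    simp_rw [Matrix.mul_apply]
    exact Finset.measurable_sum _ fun k _ => measurable_const.mul (measurable_entry k j)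
  exact Measurable.subtype_mk h

include hinv in
lemma int_inv (W : Matrix.unitaryGroup (Fin d) ℂ) (f : Matrix.unitaryGroup (Fin d) ℂ → ℂ)
    (hf : Measurable f) : ∫ U, f (W * U) ∂μ = ∫ U, f U ∂μ := by
  conv_rhs => rw [← hinv W]
  rw [integral_map (measurable_lmul W).aemeasurable hf.aestronglyMeasurable]

lemma psi_mul (W U : Matrix.unitaryGroup (Fin d) ℂ) (a : Fin d) :
    psiH ψ₀ (W * U) a = ∑ b, (W : Matrix (Fin d) (Fin d) ℂ) a b * psiH ψ₀ U b := by
  have h : ((W * U : Matrix.unitaryGroup (Fin d) ℂ) : Matrix (Fin d) (Fin d) ℂ)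
      = (W : Matrix (Fin d) (Fin d) ℂ) * (U : Matrix (Fin d) (Fin d) ℂ) := rfl
  unfold psiH
  rw [h, ← Matrix.mulVec_mulVec]
  simp [Matrix.mulVec, dotProduct, psiH]

include hψ₀ hinv in
lemma Mtrans (W : Matrix.unitaryGroup (Fin d) ℂ) (i j k l : Fin d) :
    Mmom μ ψ₀ i j k l = ∑ a, ∑ b, ∑ c, ∑ e,
      (W : Matrix (Fin d) (Fin d) ℂ) i a * (starRingEnd ℂ) ((W : Matrix (Fin d) (Fin d) ℂ) j b) *
      ((W : Matrix (Fin d) (Fin d) ℂ) k c * (starRingEnd ℂ) ((W : Matrix (Fin d) (Fin d) ℂ) l e)) *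
      Mmom μ ψ₀ a b c e := by
  have h1 := int_inv μ hinv W _ (measurable_integrand ψ₀ i j k l)
  have h2 : ∀ U, psiH ψ₀ (W * U) i * (starRingEnd ℂ) (psiH ψ₀ (W * U) j) *
      (psiH ψ₀ (W * U) k * (starRingEnd ℂ) (psiH ψ₀ (W * U) l))
      = ∑ a, ∑ b, ∑ c, ∑ e,
        ((W : Matrix (Fin d) (Fin d) ℂ) i a * (starRingEnd ℂ) ((W : Matrix (Fin d) (Fin d) ℂ) j b) *
        ((W : Matrix (Fin d) (Fin d) ℂ) k c * (starRingEnd ℂ) ((W : Matrix (Fin d) (Fin d) ℂ) l e))) *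
        (psiH ψ₀ U a * (starRingEnd ℂ) (psiH ψ₀ U b) *
          (psiH ψ₀ U c * (starRingEnd ℂ) (psiH ψ₀ U e))) := by
    intro U
    conv_rhs => rw [sum4_rev]
    simp only [psi_mul ψ₀ W U, map_sum, _root_.map_mul, Finset.sum_mul, Finset.mul_sum]
    refine Finset.sum_congr rfl fun a _ => ?_
    refine Finset.sum_congr rfl fun b _ => ?_
    refine Finset.sum_congr rfl fun c _ => ?_
    refine Finset.sum_congr rfl fun e _ => by ring
  calc Mmom μ ψ₀ i j k l = ∫ U, psiH ψ₀ (W * U) i * (starRingEnd ℂ) (psiH ψ₀ (W * U) j) *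
      (psiH ψ₀ (W * U) k * (starRingEnd ℂ) (psiH ψ₀ (W * U) l)) ∂μ := h1.symm
    _ = _ := by
      simp_rw [h2]
      exact integral_quad μ ψ₀ hψ₀ _
end inv

noncomputable def zvec {d : ℕ} (t : Fin d) : Fin d → ℂ := fun s => if s = t then Complex.I else 1

lemma zvec_self {d : ℕ} (t : Fin d) : zvec t t = Complex.I := if_pos rfl
lemma zvec_ne {d : ℕ} {s t : Fin d} (h : ¬ s = t) : zvec t s = 1 := if_neg h

section phase
variable {d : ℕ} (μ : Measure (Matrix.unitaryGroup (Fin d) ℂ)) [IsProbabilityMeasure μ]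
  (ψ₀ : Fin d → ℂ) (hψ₀ : ∑ i, Complex.normSq (ψ₀ i) = 1)
  (hinv : ∀ U : Matrix.unitaryGroup (Fin d) ℂ, μ.map (fun V => U * V) = μ)

lemma zvec_star_mul (t : Fin d) : star (zvec t) * zvec t = 1 := by
  funext s
  simp only [Pi.mul_apply, Pi.star_apply, Pi.one_apply, Complex.star_def, zvec]
  by_cases h : s = t <;> simp [h, Complex.conj_I]

lemma zvec_mem (t : Fin d) : Matrix.diagonal (zvec t) ∈ Matrix.unitaryGroup (Fin d) ℂ := by
  have h : ∀ s, (starRingEnd ℂ) (zvec t s) * zvec t s = 1 := by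
    intro s; by_cases hs : s = t <;> simp [zvec, hs, Complex.conj_I]
  have h' : ∀ s, zvec t s * (starRingEnd ℂ) (zvec t s) = 1 := fun s => by rw [mul_comm]; exact h s
  constructor
  · show star (Matrix.diagonal (zvec t)) * Matrix.diagonal (zvec t) = 1
    rw [Matrix.star_eq_conjTranspose, Matrix.diagonal_conjTranspose, Matrix.diagonal_mul_diagonal]
    ext i j
    by_cases hij : i = j
    · subst hij
      simp [Matrix.diagonal_apply, Matrix.one_apply, Pi.star_apply, Complex.star_def, h]
    · simp [Matrix.diagonal_apply, hij, Matrix.one_apply]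
  · show Matrix.diagonal (zvec t) * star (Matrix.diagonal (zvec t)) = 1
    rw [Matrix.star_eq_conjTranspose, Matrix.diagonal_conjTranspose, Matrix.diagonal_mul_diagonal]
    ext i j
    by_cases hij : i = j
    · subst hij
      simp [Matrix.diagonal_apply, Matrix.one_apply, Pi.star_apply, Complex.star_def, h']
    · simp [Matrix.diagonal_apply, hij, Matrix.one_apply]

include hψ₀ hinv in
lemma Mphase (t i j k l : Fin d) :
    Mmom μ ψ₀ i j k l = zvec t i * (starRingEnd ℂ) (zvec t j) *
      (zvec t k * (starRingEnd ℂ) (zvec t l)) * Mmom μ ψ₀ i j k l := by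
  have h := Mtrans μ ψ₀ hψ₀ hinv ⟨_, zvec_mem t⟩ i j k l
  simpa [Matrix.diagonal_apply, apply_ite (starRingEnd ℂ), ite_mul, zero_mul, mul_ite, mul_zero,
    Finset.sum_ite_eq, Finset.mem_univ] using h
end phase

section mzero
variable {d : ℕ} (μ : Measure (Matrix.unitaryGroup (Fin d) ℂ)) [IsProbabilityMeasure μ]
  (ψ₀ : Fin d → ℂ) (hψ₀ : ∑ i, Complex.normSq (ψ₀ i) = 1)
  (hinv : ∀ U : Matrix.unitaryGroup (Fin d) ℂ, μ.map (fun V => U * V) = μ)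

include hψ₀ hinv in
lemma Mzero (a b c e : Fin d) (h : ¬((a = b ∧ c = e) ∨ (a = e ∧ c = b))) :
    Mmom μ ψ₀ a b c e = 0 := by
  have cancel : ∀ f : ℂ, f ≠ 1 →
      Mmom μ ψ₀ a b c e = f * Mmom μ ψ₀ a b c e → Mmom μ ψ₀ a b c e = 0 := by
    intro f hf heq
    have h2 : (1 - f) * Mmom μ ψ₀ a b c e = 0 := by linear_combination heq
    rcases mul_eq_zero.mp h2 with h3 | h3
    · exact absurd (by linear_combination -h3) hf
    · exact h3
  by_cases hab : a = b
  · subst hab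
    have hce : ¬ c = e := fun hce => h (Or.inl ⟨rfl, hce⟩)
    have key := Mphase μ ψ₀ hψ₀ hinv c a a c e
    rw [zvec_self, zvec_ne (fun x => hce x.symm)] at key
    by_cases hac : a = c
    · subst hac
      rw [zvec_self] at key
      refine cancel _ ?_ key
      simp [Complex.conj_I, Complex.ext_iff] <;> norm_num
    · rw [zvec_ne hac] at key
      refine cancel _ ?_ key
      simp [Complex.conj_I, Complex.ext_iff] <;> norm_num
  · by_cases hae : a = e
    · subst hae
      have hcb : ¬ c = b := fun l => h (Or.inr ⟨rfl, l⟩)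
      have key := Mphase μ ψ₀ hψ₀ hinv b a b c a
      rw [zvec_self, zvec_ne hab, zvec_ne hcb] at key
      refine cancel _ ?_ key
      simp [Complex.conj_I, Complex.ext_iff] <;> norm_num
    · have key := Mphase μ ψ₀ hψ₀ hinv a a b c e
      rw [zvec_self, zvec_ne (fun x => hab x.symm), zvec_ne (fun x => hae x.symm)] at key
      by_cases hca : c = a
      · subst hca
        rw [zvec_self] at key
        refine cancel _ ?_ key
        simp [Complex.conj_I, Complex.ext_iff] <;> norm_num
      · rw [zvec_ne hca] at key
        refine cancel _ ?_ key
        simp [Complex.conj_I, Complex.ext_iff] <;> norm_num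
end mzero

def permMat {d : ℕ} (σ : Equiv.Perm (Fin d)) : Matrix (Fin d) (Fin d) ℂ :=
  Matrix.of fun x y => if σ y = x then 1 else 0

section perm
variable {d : ℕ} (μ : Measure (Matrix.unitaryGroup (Fin d) ℂ)) [IsProbabilityMeasure μ]
  (ψ₀ : Fin d → ℂ) (hψ₀ : ∑ i, Complex.normSq (ψ₀ i) = 1)
  (hinv : ∀ U : Matrix.unitaryGroup (Fin d) ℂ, μ.map (fun V => U * V) = μ)

lemma permMat_mem (σ : Equiv.Perm (Fin d)) : permMat σ ∈ Matrix.unitaryGroup (Fin d) ℂ := by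
  constructor
  · show star (permMat σ) * permMat σ = 1
    ext i j
    rw [Matrix.mul_apply]
    simp only [Matrix.star_apply, Matrix.conjTranspose_apply, permMat, Matrix.of_apply,
      Complex.star_def, apply_ite (starRingEnd ℂ), _root_.map_one, map_zero, ite_mul, one_mul, zero_mul,
      Finset.sum_ite_eq, Finset.mem_univ, if_true, Matrix.one_apply, EmbeddingLike.apply_eq_iff_eq]
    by_cases hij : i = j <;> simp [hij, eq_comm]
  · show permMat σ * star (permMat σ) = 1
    ext i j
    rw [Matrix.mul_apply]
    calc ∑ x, permMat σ i x * star (permMat σ j x)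
        = ∑ x, permMat σ i (σ.symm x) * star (permMat σ j (σ.symm x)) :=
          (Equiv.sum_comp σ.symm (fun x => permMat σ i x * star (permMat σ j x))).symm
      _ = (1 : Matrix (Fin d) (Fin d) ℂ) i j := by
          simp only [permMat, Matrix.of_apply, Equiv.apply_symm_apply, Complex.star_def,
            apply_ite (starRingEnd ℂ), _root_.map_one, map_zero, ite_mul, one_mul, zero_mul,
            Finset.sum_ite_eq, Finset.mem_univ, if_true, Matrix.one_apply]
          by_cases hij : i = j <;> simp [hij, eq_comm]

include hψ₀ hinv in
lemma Mperm (σ : Equiv.Perm (Fin d)) (a b c e : Fin d) :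
    Mmom μ ψ₀ (σ a) (σ b) (σ c) (σ e) = Mmom μ ψ₀ a b c e := by
  have h := Mtrans μ ψ₀ hψ₀ hinv ⟨_, permMat_mem σ⟩ (σ a) (σ b) (σ c) (σ e)
  simpa [permMat, apply_ite (starRingEnd ℂ), EmbeddingLike.apply_eq_iff_eq, ite_mul, zero_mul,
    one_mul, mul_ite, mul_zero, mul_one, Finset.sum_ite_eq', Finset.mem_univ] using h
end perm

section norm1
variable {d : ℕ} (μ : Measure (Matrix.unitaryGroup (Fin d) ℂ)) [IsProbabilityMeasure μ]
  (ψ₀ : Fin d → ℂ) (hψ₀ : ∑ i, Complex.normSq (ψ₀ i) = 1)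
  (hinv : ∀ U : Matrix.unitaryGroup (Fin d) ℂ, μ.map (fun V => U * V) = μ)

include hψ₀ in
lemma Mnorm : ∑ i, ∑ k, Mmom μ ψ₀ i i k k = 1 := by
  have h1 : ∀ i : Fin d, ∑ k, Mmom μ ψ₀ i i k k
      = ∫ U, ∑ k, psiH ψ₀ U i * (starRingEnd ℂ) (psiH ψ₀ U i) *
          (psiH ψ₀ U k * (starRingEnd ℂ) (psiH ψ₀ U k)) ∂μ := by
    intro i
    exact (integral_finset_sum _ (fun k _ => integrable_integrand μ ψ₀ hψ₀ i i k k)).symm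
  simp_rw [h1]
  rw [← integral_finset_sum _ (fun i _ => by
    exact integrable_finset_sum _ (fun k _ => integrable_integrand μ ψ₀ hψ₀ i i k k))]
  have h2 : ∀ U : Matrix.unitaryGroup (Fin d) ℂ,
      ∑ i, ∑ k, psiH ψ₀ U i * (starRingEnd ℂ) (psiH ψ₀ U i) *
        (psiH ψ₀ U k * (starRingEnd ℂ) (psiH ψ₀ U k)) = 1 := by
    intro U
    have hn := psi_norm_c ψ₀ hψ₀ U
    calc ∑ i, ∑ k, psiH ψ₀ U i * (starRingEnd ℂ) (psiH ψ₀ U i) *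
        (psiH ψ₀ U k * (starRingEnd ℂ) (psiH ψ₀ U k))
        = (∑ i, psiH ψ₀ U i * (starRingEnd ℂ) (psiH ψ₀ U i)) *
          (∑ k, psiH ψ₀ U k * (starRingEnd ℂ) (psiH ψ₀ U k)) := by
          rw [Finset.sum_mul_sum]
      _ = 1 := by rw [hn, one_mul]
  simp_rw [h2]
  simp

lemma Mswap (a b : Fin d) : Mmom μ ψ₀ a b b a = Mmom μ ψ₀ a a b b := by
  unfold Mmom
  congr 1
  funext U
  ring

lemma exists_perm {i k p q : Fin d} (hik : i ≠ k) (hpq : p ≠ q) :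
    ∃ σ : Equiv.Perm (Fin d), σ p = i ∧ σ q = k := by
  refine ⟨Equiv.swap ((Equiv.swap p i) q) k * Equiv.swap p i, ?_, ?_⟩
  · rw [Equiv.Perm.mul_apply, Equiv.swap_apply_left]
    refine Equiv.swap_apply_of_ne_of_ne ?_ hik
    intro hiq
    apply hpq
    have h2 : (Equiv.swap p i) p = (Equiv.swap p i) q := by
      rw [Equiv.swap_apply_left]; exact hiq
    exact Equiv.injective _ h2
  · rw [Equiv.Perm.mul_apply, Equiv.swap_apply_left]
end norm1

noncomputable def rr : ℂ := (Real.sqrt 2 : ℂ)⁻¹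

lemma rr_mul : rr * rr = (2 : ℂ)⁻¹ := by
  unfold rr
  rw [← mul_inv, ← Complex.ofReal_mul, Real.mul_self_sqrt (by norm_num)]
  norm_num

lemma rr_conj : (starRingEnd ℂ) rr = rr := by
  unfold rr
  rw [map_inv₀, Complex.conj_ofReal]

noncomputable def rotMat {d : ℕ} (p q : Fin d) : Matrix (Fin d) (Fin d) ℂ :=
  Matrix.of fun x y =>
    if x = p then (if y = p then rr else if y = q then rr else 0)
    else if x = q then (if y = p then rr else if y = q then -rr else 0)
    else if x = y then 1 else 0

lemma rotMat_entry_conj {d : ℕ} (p q x y : Fin d) :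
    (starRingEnd ℂ) (rotMat p q x y) = rotMat p q x y := by
  simp only [rotMat, Matrix.of_apply]
  split_ifs <;> simp [rr_conj]

section rot
variable {d : ℕ} {p q : Fin d} (hpq : p ≠ q)

include hpq in
lemma sum_split (f : Fin d → ℂ) :
    ∑ x, f x = f p + f q + ∑ x ∈ (Finset.univ.erase p).erase q, f x := by
  rw [← Finset.add_sum_erase _ f (Finset.mem_univ p),
    ← Finset.add_sum_erase _ f (Finset.mem_erase.mpr ⟨hpq.symm, Finset.mem_univ q⟩), ← add_assoc]

include hpq in
lemma tailL {z z' : Fin d} (hz : z = p ∨ z = q) :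
    ∑ x ∈ (Finset.univ.erase p).erase q, rotMat p q x z * rotMat p q x z' = 0 := by
  refine Finset.sum_eq_zero fun x hx => ?_
  obtain ⟨hxq, hxp, -⟩ : x ≠ q ∧ x ≠ p ∧ True := by
    have h1 := Finset.mem_erase.mp hx
    have h2 := Finset.mem_erase.mp h1.2
    exact ⟨h1.1, h2.1, trivial⟩
  have hxz : ¬ x = z := by rcases hz with h | h <;> simp [h, hxp, hxq]
  simp [rotMat, hxp, hxq, hxz]

include hpq in
lemma tailR {z z' : Fin d} (hz : z' = p ∨ z' = q) :
    ∑ x ∈ (Finset.univ.erase p).erase q, rotMat p q x z * rotMat p q x z' = 0 := by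
  refine Finset.sum_eq_zero fun x hx => ?_
  obtain ⟨hxq, hxp⟩ : x ≠ q ∧ x ≠ p := by
    have h1 := Finset.mem_erase.mp hx
    have h2 := Finset.mem_erase.mp h1.2
    exact ⟨h1.1, h2.1⟩
  have hxz : ¬ x = z' := by rcases hz with h | h <;> simp [h, hxp, hxq]
  simp [rotMat, hxp, hxq, hxz]

include hpq in
lemma tailN {z z' : Fin d} (hzp : z ≠ p) (hzq : z ≠ q) :
    ∑ x ∈ (Finset.univ.erase p).erase q, rotMat p q x z * rotMat p q x z'
      = if z = z' then 1 else 0 := by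
  have hmem : z ∈ (Finset.univ.erase p).erase q :=
    Finset.mem_erase.mpr ⟨hzq, Finset.mem_erase.mpr ⟨hzp, Finset.mem_univ z⟩⟩
  have hterm : ∀ x ∈ (Finset.univ.erase p).erase q,
      rotMat p q x z * rotMat p q x z' = if x = z then (if z = z' then 1 else 0) else 0 := by
    intro x hx
    obtain ⟨hxq, hxp⟩ : x ≠ q ∧ x ≠ p := by
      have h1 := Finset.mem_erase.mp hx
      have h2 := Finset.mem_erase.mp h1.2
      exact ⟨h1.1, h2.1⟩
    by_cases hxz : x = z
    · subst hxz
      by_cases hzz : x = z'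
      · subst hzz; simp [rotMat, hxp, hxq]
      · simp [rotMat, hxp, hxq, hzz]
    · simp [rotMat, hxp, hxq, hxz]
  rw [Finset.sum_congr rfl hterm, Finset.sum_ite_eq' _ z, if_pos hmem]

include hpq in
lemma rotMat_mem : rotMat p q ∈ Matrix.unitaryGroup (Fin d) ℂ := by
  have Rpp : rotMat p q p p = rr := by simp [rotMat]
  have Rpq : rotMat p q p q = rr := by simp [rotMat, hpq.symm]
  have Rqp : rotMat p q q p = rr := by simp [rotMat, hpq]
  have Rqq : rotMat p q q q = -rr := by simp [rotMat, hpq, hpq.symm]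
  have Rp_o : ∀ z, ¬ z = p → ¬ z = q → rotMat p q p z = 0 := by
    intro z h1 h2; simp [rotMat, h1, h2]
  have Rq_o : ∀ z, ¬ z = p → ¬ z = q → rotMat p q q z = 0 := by
    intro z h1 h2; simp [rotMat, hpq, h1, h2]
  have key : star (rotMat p q) * rotMat p q = 1 := by
    ext y y'
    rw [Matrix.mul_apply]
    have hterm : ∀ x, (star (rotMat p q)) y x * rotMat p q x y'
        = rotMat p q x y * rotMat p q x y' := by
      intro x
      rw [Matrix.star_apply, Complex.star_def, rotMat_entry_conj]
    simp_rw [hterm]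
    rw [sum_split hpq]
    by_cases hyp : y = p
    · rw [hyp]
      by_cases hyp' : y' = p
      · rw [hyp', Rpp, Rqp, tailL hpq (Or.inl rfl), Matrix.one_apply_eq]
        linear_combination (2:ℂ) * rr_mul
      · by_cases hyq' : y' = q
        · rw [hyq', Rpp, Rpq, Rqp, Rqq, tailL hpq (Or.inl rfl), Matrix.one_apply_ne hpq]
          ring
        · rw [Rp_o y' hyp' hyq', Rq_o y' hyp' hyq', tailL hpq (Or.inl rfl),
            Matrix.one_apply_ne (fun h => hyp' h.symm)]
          ring
    · by_cases hyq : y = q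
      · rw [hyq]
        by_cases hyp' : y' = p
        · rw [hyp', Rpq, Rpp, Rqq, Rqp, tailL hpq (Or.inr rfl), Matrix.one_apply_ne hpq.symm]
          ring
        · by_cases hyq' : y' = q
          · rw [hyq', Rpq, Rqq, tailL hpq (Or.inr rfl), Matrix.one_apply_eq]
            linear_combination (2:ℂ) * rr_mul
          · rw [Rp_o y' hyp' hyq', Rq_o y' hyp' hyq', tailL hpq (Or.inr rfl),
              Matrix.one_apply_ne (fun h => hyq' h.symm)]
            ring
      · by_cases hyp' : y' = p
        · rw [hyp', Rp_o y hyp hyq, Rq_o y hyp hyq, tailR hpq (Or.inl rfl),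
            Matrix.one_apply_ne hyp]
          ring
        · by_cases hyq' : y' = q
          · rw [hyq', Rp_o y hyp hyq, Rq_o y hyp hyq, tailR hpq (Or.inr rfl),
              Matrix.one_apply_ne hyq]
            ring
          · rw [Rp_o y hyp hyq, Rq_o y hyp hyq, tailN hpq hyp hyq, Matrix.one_apply]
            ring
  exact ⟨key, mul_eq_one_comm.mp key⟩
end rot

lemma sum_two {d : ℕ} {p q : Fin d} (hpq : p ≠ q) (u v : ℂ) (g : Fin d → ℂ) :
    ∑ a, (if a = p then u else if a = q then v else 0) * g a = u * g p + v * g q := by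
  have h : ∀ a, (if a = p then u else if a = q then v else 0) * g a
      = (if a = p then u * g a else 0) + (if a = q then v * g a else 0) := by
    intro a
    by_cases h1 : a = p
    · by_cases h2 : a = q
      · exact absurd (h1.symm.trans h2) hpq
      · simp [h1, h2, hpq]
    · by_cases h2 : a = q <;> simp [h1, h2, Ne.symm hpq]
  simp_rw [h, Finset.sum_add_distrib, Finset.sum_ite_eq', Finset.mem_univ, if_true]

lemma collapse {d : ℕ} (w x y z : Fin d → ℂ) (F : Fin d → Fin d → Fin d → Fin d → ℂ) :
    (∑ a, ∑ b, ∑ c, ∑ e, w a * x b * (y c * z e) * F a b c e)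
    = ∑ a, w a * ∑ b, x b * ∑ c, y c * ∑ e, z e * F a b c e := by
  simp only [Finset.mul_sum]
  refine Finset.sum_congr rfl fun a _ => ?_
  refine Finset.sum_congr rfl fun b _ => ?_
  refine Finset.sum_congr rfl fun c _ => ?_
  exact Finset.sum_congr rfl fun e _ => by ring

section crel
variable {d : ℕ} (μ : Measure (Matrix.unitaryGroup (Fin d) ℂ)) [IsProbabilityMeasure μ]
  (ψ₀ : Fin d → ℂ) (hψ₀ : ∑ i, Complex.normSq (ψ₀ i) = 1)
  (hinv : ∀ U : Matrix.unitaryGroup (Fin d) ℂ, μ.map (fun V => U * V) = μ)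

include hψ₀ hinv in
lemma Crel {p q : Fin d} (hpq : p ≠ q) :
    Mmom μ ψ₀ p p p p = 2 * Mmom μ ψ₀ p p q q := by
  have h := Mtrans μ ψ₀ hψ₀ hinv ⟨_, rotMat_mem hpq⟩ p p p p
  have hcoe : ((⟨rotMat p q, rotMat_mem hpq⟩ : Matrix.unitaryGroup (Fin d) ℂ) :
      Matrix (Fin d) (Fin d) ℂ) = rotMat p q := rfl
  rw [hcoe] at h
  simp only [rotMat_entry_conj] at h
  rw [collapse] at h
  have hrow : ∀ a, rotMat p q p a = if a = p then rr else if a = q then rr else 0 := by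
    intro a; simp [rotMat]
  simp only [hrow] at h
  simp only [sum_two hpq] at h
  have z1 : Mmom μ ψ₀ p p p q = 0 := Mzero μ ψ₀ hψ₀ hinv _ _ _ _ (by simp [hpq, hpq.symm])
  have z2 : Mmom μ ψ₀ p p q p = 0 := Mzero μ ψ₀ hψ₀ hinv _ _ _ _ (by simp [hpq, hpq.symm])
  have z3 : Mmom μ ψ₀ p q p p = 0 := Mzero μ ψ₀ hψ₀ hinv _ _ _ _ (by simp [hpq, hpq.symm])
  have z4 : Mmom μ ψ₀ q p p p = 0 := Mzero μ ψ₀ hψ₀ hinv _ _ _ _ (by simp [hpq, hpq.symm])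
  have z5 : Mmom μ ψ₀ p q p q = 0 := Mzero μ ψ₀ hψ₀ hinv _ _ _ _ (by simp [hpq, hpq.symm])
  have z6 : Mmom μ ψ₀ q p q p = 0 := Mzero μ ψ₀ hψ₀ hinv _ _ _ _ (by simp [hpq, hpq.symm])
  have z7 : Mmom μ ψ₀ p q q q = 0 := Mzero μ ψ₀ hψ₀ hinv _ _ _ _ (by simp [hpq, hpq.symm])
  have z8 : Mmom μ ψ₀ q p q q = 0 := Mzero μ ψ₀ hψ₀ hinv _ _ _ _ (by simp [hpq, hpq.symm])
  have z9 : Mmom μ ψ₀ q q p q = 0 := Mzero μ ψ₀ hψ₀ hinv _ _ _ _ (by simp [hpq, hpq.symm])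
  have z10 : Mmom μ ψ₀ q q q p = 0 := Mzero μ ψ₀ hψ₀ hinv _ _ _ _ (by simp [hpq, hpq.symm])
  have hqqqq : Mmom μ ψ₀ q q q q = Mmom μ ψ₀ p p p p := by
    have := Mperm μ ψ₀ hψ₀ hinv (Equiv.swap p q) p p p p
    rwa [Equiv.swap_apply_left] at this
  have hqqpp : Mmom μ ψ₀ q q p p = Mmom μ ψ₀ p p q q := by
    have := Mperm μ ψ₀ hψ₀ hinv (Equiv.swap p q) p p q q
    rwa [Equiv.swap_apply_left, Equiv.swap_apply_right] at this
  have hpqqp : Mmom μ ψ₀ p q q p = Mmom μ ψ₀ p p q q := Mswap μ ψ₀ p q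
  have hqppq : Mmom μ ψ₀ q p p q = Mmom μ ψ₀ p p q q :=
    (Mswap μ ψ₀ q p).trans hqqpp
  rw [z1, z2, z3, z4, z5, z6, z7, z8, z9, z10, hqqqq, hqqpp, hpqqp, hqppq] at h
  linear_combination 2 * h + 2 * (2 * Mmom μ ψ₀ p p p p + 4 * Mmom μ ψ₀ p p q q)
    * (rr * rr + (2:ℂ)⁻¹) * rr_mul
end crel

section mval
variable {d : ℕ} (μ : Measure (Matrix.unitaryGroup (Fin d) ℂ)) [IsProbabilityMeasure μ]
  (ψ₀ : Fin d → ℂ) (hψ₀ : ∑ i, Complex.normSq (ψ₀ i) = 1)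
  (hinv : ∀ U : Matrix.unitaryGroup (Fin d) ℂ, μ.map (fun V => U * V) = μ)

include hψ₀ hinv in
lemma factAC (hd : 0 < d) :
    (∀ i k : Fin d, i ≠ k → Mmom μ ψ₀ i i k k = ((d:ℂ) * (d+1))⁻¹) ∧
    (∀ i : Fin d, Mmom μ ψ₀ i i i i = 2 * ((d:ℂ) * (d+1))⁻¹) := by
  rcases (by omega : 2 ≤ d ∨ d = 1) with hd2 | hd1
  · set p : Fin d := ⟨0, by omega⟩ with hp
    set q : Fin d := ⟨1, by omega⟩ with hq
    have hpq : p ≠ q := by simp [hp, hq, Fin.ext_iff]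
    set A0 := Mmom μ ψ₀ p p q q with hA0
    have hCA : Mmom μ ψ₀ p p p p = 2 * A0 := Crel μ ψ₀ hψ₀ hinv hpq
    have htrans : ∀ i k : Fin d, i ≠ k → Mmom μ ψ₀ i i k k = A0 := by
      intro i k hik
      obtain ⟨σ, hσp, hσq⟩ := exists_perm hik hpq
      have := Mperm μ ψ₀ hψ₀ hinv σ p p q q
      rwa [hσp, hσq] at this
    have hdiag : ∀ i : Fin d, Mmom μ ψ₀ i i i i = 2 * A0 := by
      intro i
      have := Mperm μ ψ₀ hψ₀ hinv (Equiv.swap p i) p p p p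
      rw [Equiv.swap_apply_left] at this
      rw [this, hCA]
    have hnorm := Mnorm μ ψ₀ hψ₀
    have hterm : ∀ i k : Fin d, Mmom μ ψ₀ i i k k = A0 + (if i = k then A0 else 0) := by
      intro i k
      by_cases hik : i = k
      · subst hik
        rw [hdiag i, if_pos rfl]; ring
      · rw [htrans i k hik, if_neg hik]; ring
    simp_rw [hterm, Finset.sum_add_distrib, Finset.sum_ite_eq, Finset.mem_univ, if_true,
      Finset.sum_const, Finset.card_univ, Fintype.card_fin, nsmul_eq_mul] at hnorm
    -- hnorm : ∑ i, (d * A0 + A0) = 1  (roughly)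
    have hd0 : (d : ℂ) ≠ 0 := Nat.cast_ne_zero.mpr (by omega)
    have hA0val : A0 = ((d:ℂ) * (d+1))⁻¹ := by
      have hne : (d : ℂ) * ((d:ℂ) + 1) ≠ 0 := by
        apply mul_ne_zero hd0
        have h1 : ((d + 1 : ℕ) : ℂ) ≠ 0 := Nat.cast_ne_zero.mpr (by omega)
        push_cast at h1
        exact h1
      field_simp
      linear_combination hnorm
    exact ⟨fun i k hik => (htrans i k hik).trans hA0val,
      fun i => (hdiag i).trans (by rw [hA0val])⟩
  · subst hd1
    have hone : ∀ x y : Fin 1, x = y := fun x y => Subsingleton.elim x y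
    have hnorm := Mnorm μ ψ₀ hψ₀
    simp only [Fin.sum_univ_one] at hnorm
    constructor
    · intro i k hik
      exact absurd (hone i k) hik
    · intro i
      rw [hone i 0, hnorm]
      norm_num
end mval

section mval2
variable {d : ℕ} (μ : Measure (Matrix.unitaryGroup (Fin d) ℂ)) [IsProbabilityMeasure μ]
  (ψ₀ : Fin d → ℂ) (hψ₀ : ∑ i, Complex.normSq (ψ₀ i) = 1)
  (hinv : ∀ U : Matrix.unitaryGroup (Fin d) ℂ, μ.map (fun V => U * V) = μ)

include hψ₀ hinv in
lemma Mval (hd : 0 < d) (i j k l : Fin d) :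
    Mmom μ ψ₀ i j k l = ((d:ℂ) * (d+1))⁻¹ *
      ((if i = j then (1:ℂ) else 0) * (if k = l then 1 else 0)
        + (if i = l then 1 else 0) * (if k = j then 1 else 0)) := by
  obtain ⟨hA, hC⟩ := factAC μ ψ₀ hψ₀ hinv hd
  by_cases h1 : i = j ∧ k = l
  · obtain ⟨rfl, rfl⟩ := h1
    by_cases h2 : i = k
    · subst h2
      rw [hC i]
      simp; ring
    · rw [hA i k h2]
      simp [h2]
  · by_cases h2 : i = l ∧ k = j
    · obtain ⟨rfl, rfl⟩ := h2
      -- now goal about Mmom μ ψ₀ i k k i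
      have hik : i ≠ k := by
        intro h
        exact h1 ⟨h, h.symm⟩
      rw [Mswap μ ψ₀ i k, hA i k hik]
      simp [hik]
    · rw [Mzero μ ψ₀ hψ₀ hinv i j k l (by tauto)]
      have hb : ((if i = j then (1:ℂ) else 0) * (if k = l then 1 else 0)
          + (if i = l then 1 else 0) * (if k = j then 1 else 0)) = 0 := by
        by_cases a : i = j <;> by_cases b : k = l <;> by_cases c : i = l <;>
          by_cases e : k = j <;> subst_vars <;> simp_all
      rw [hb, mul_zero]
end mval2

lemma sum4_cycle {d : ℕ} (g : Fin d → Fin d → Fin d → Fin d → ℂ) :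
    ∑ a, ∑ b, ∑ c, ∑ e, g a b c e = ∑ a, ∑ b, ∑ c, ∑ e, g e c a b := by
  have h := Fintype.sum_equiv
    (⟨fun x : Fin d × Fin d × Fin d × Fin d => (x.2.2.1, x.2.2.2, x.2.1, x.1),
      fun x => (x.2.2.2, x.2.2.1, x.1, x.2.1), fun x => rfl, fun x => rfl⟩
      : (Fin d × Fin d × Fin d × Fin d) ≃ (Fin d × Fin d × Fin d × Fin d))
    (fun x : Fin d × Fin d × Fin d × Fin d => g x.1 x.2.1 x.2.2.1 x.2.2.2)
    (fun x : Fin d × Fin d × Fin d × Fin d => g x.2.2.2 x.2.2.1 x.1 x.2.1) (fun x => rfl)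
  simpa [Fintype.sum_prod_type] using h

lemma halg {d : ℕ} (A' : ℂ) (B : Matrix (Fin d) (Fin d) ℂ) :
    (∑ x1, ∑ x2, ∑ x3, ∑ x4, B x2 x1 * (starRingEnd ℂ) (B x3 x4) *
      (A' * ((if x1 = x2 then (1:ℂ) else 0) * (if x3 = x4 then 1 else 0)
        + (if x1 = x4 then 1 else 0) * (if x3 = x2 then 1 else 0))))
    = A' * (B.trace * (starRingEnd ℂ) (B.trace)
        + ∑ x1, ∑ x2, B x2 x1 * (starRingEnd ℂ) (B x2 x1)) := by
  have split : ∀ x1 x2 x3 x4 : Fin d, B x2 x1 * (starRingEnd ℂ) (B x3 x4) *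
      (A' * ((if x1 = x2 then (1:ℂ) else 0) * (if x3 = x4 then 1 else 0)
        + (if x1 = x4 then 1 else 0) * (if x3 = x2 then 1 else 0)))
      = (if x1 = x2 then (if x3 = x4 then A' * (B x2 x1 * (starRingEnd ℂ) (B x3 x4)) else 0) else 0)
        + (if x1 = x4 then (if x3 = x2 then A' * (B x2 x1 * (starRingEnd ℂ) (B x3 x4)) else 0) else 0) := by
    intro x1 x2 x3 x4
    by_cases h1 : x1 = x2 <;> by_cases h2 : x3 = x4 <;> by_cases h3 : x1 = x4 <;>
      by_cases h4 : x3 = x2 <;> subst_vars <;> simp_all <;> ring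
  simp_rw [split, Finset.sum_add_distrib]
  have hS1 : (∑ x1, ∑ x2, ∑ x3, ∑ x4 : Fin d,
      (if x1 = x2 then (if x3 = x4 then A' * (B x2 x1 * (starRingEnd ℂ) (B x3 x4)) else 0) else 0))
      = A' * (B.trace * (starRingEnd ℂ) (B.trace)) := by
    simp only [Finset.sum_ite_irrel, Finset.sum_const_zero, Finset.sum_ite_eq,
      Finset.sum_ite_eq', Finset.mem_univ, if_true]
    rw [Matrix.trace]
    simp only [Matrix.diag, map_sum, Finset.sum_mul_sum, Finset.mul_sum]
    rw [Finset.sum_comm]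
    refine Finset.sum_congr rfl fun i _ => ?_
    rw [Finset.sum_mul, Finset.mul_sum]
  have hS2 : (∑ x1, ∑ x2, ∑ x3, ∑ x4 : Fin d,
      (if x1 = x4 then (if x3 = x2 then A' * (B x2 x1 * (starRingEnd ℂ) (B x3 x4)) else 0) else 0))
      = A' * ∑ x1, ∑ x2, B x2 x1 * (starRingEnd ℂ) (B x2 x1) := by
    simp only [Finset.sum_ite_irrel, Finset.sum_const_zero, Finset.sum_ite_eq,
      Finset.sum_ite_eq', Finset.mem_univ, if_true, Finset.mul_sum]
  rw [hS1, hS2, mul_add]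

section purity
variable {d : ℕ} (μ : Measure (Matrix.unitaryGroup (Fin d) ℂ)) [IsProbabilityMeasure μ]
  (ψ₀ : Fin d → ℂ) (hψ₀ : ∑ i, Complex.normSq (ψ₀ i) = 1)
  (hinv : ∀ U : Matrix.unitaryGroup (Fin d) ℂ, μ.map (fun V => U * V) = μ)

lemma trace_expand (B : Matrix (Fin d) (Fin d) ℂ) (ψ : Fin d → ℂ) :
    (B * outerProj ψ).trace = ∑ a, ∑ b, B a b * (ψ b * (starRingEnd ℂ) (ψ a)) := by
  simp [Matrix.trace, Matrix.diag, Matrix.mul_apply, outerProj]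

lemma hexp (B : Matrix (Fin d) (Fin d) ℂ) (ψ : Fin d → ℂ) :
    (B * outerProj ψ).trace * (starRingEnd ℂ) ((B * outerProj ψ).trace)
    = ∑ x1, ∑ x2, ∑ x3, ∑ x4, (B x2 x1 * (starRingEnd ℂ) (B x3 x4)) *
        (ψ x1 * (starRingEnd ℂ) (ψ x2) * (ψ x3 * (starRingEnd ℂ) (ψ x4))) := by
  rw [trace_expand]
  conv_rhs => rw [sum4_cycle]
  simp only [map_sum, _root_.map_mul, Finset.sum_mul, Finset.mul_sum]
  refine Finset.sum_congr rfl fun a _ => ?_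
  refine Finset.sum_congr rfl fun b _ => ?_
  refine Finset.sum_congr rfl fun c _ => ?_
  refine Finset.sum_congr rfl fun e _ => by rw [Complex.conj_conj]; ring

include hψ₀ in
lemma G_integrable (B : Matrix (Fin d) (Fin d) ℂ) :
    Integrable (fun U => (B * outerProj (psiH ψ₀ U)).trace *
      (starRingEnd ℂ) ((B * outerProj (psiH ψ₀ U)).trace)) μ := by
  have h : (fun U => (B * outerProj (psiH ψ₀ U)).trace *
      (starRingEnd ℂ) ((B * outerProj (psiH ψ₀ U)).trace))
      = fun U => ∑ x1, ∑ x2, ∑ x3, ∑ x4, (B x2 x1 * (starRingEnd ℂ) (B x3 x4)) *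
        (psiH ψ₀ U x1 * (starRingEnd ℂ) (psiH ψ₀ U x2) *
          (psiH ψ₀ U x3 * (starRingEnd ℂ) (psiH ψ₀ U x4))) := by
    funext U; exact hexp B (psiH ψ₀ U)
  rw [h]
  exact integrable_finset_sum _ fun x1 _ => integrable_finset_sum _ fun x2 _ =>
    integrable_finset_sum _ fun x3 _ => integrable_finset_sum _ fun x4 _ =>
      (integrable_integrand μ ψ₀ hψ₀ x1 x2 x3 x4).const_mul _

include hψ₀ hinv in
lemma purity_int (hd : 0 < d) (B : Matrix (Fin d) (Fin d) ℂ) :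
    ∫ U, ((B * outerProj (psiH ψ₀ U)).trace *
        (starRingEnd ℂ) ((B * outerProj (psiH ψ₀ U)).trace)) ∂μ
    = ((d:ℂ) * (d+1))⁻¹ * (B.trace * (starRingEnd ℂ) (B.trace)
        + ∑ x1, ∑ x2, B x2 x1 * (starRingEnd ℂ) (B x2 x1)) := by
  have h : (fun U => (B * outerProj (psiH ψ₀ U)).trace *
      (starRingEnd ℂ) ((B * outerProj (psiH ψ₀ U)).trace))
      = fun U => ∑ x1, ∑ x2, ∑ x3, ∑ x4, (B x2 x1 * (starRingEnd ℂ) (B x3 x4)) *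
        (psiH ψ₀ U x1 * (starRingEnd ℂ) (psiH ψ₀ U x2) *
          (psiH ψ₀ U x3 * (starRingEnd ℂ) (psiH ψ₀ U x4))) := by
    funext U; exact hexp B (psiH ψ₀ U)
  rw [h, integral_quad μ ψ₀ hψ₀ _]
  have hM : ∀ x1 x2 x3 x4 : Fin d, Mmom μ ψ₀ x1 x2 x3 x4 = ((d:ℂ) * (d+1))⁻¹ *
      ((if x1 = x2 then (1:ℂ) else 0) * (if x3 = x4 then 1 else 0)
        + (if x1 = x4 then 1 else 0) * (if x3 = x2 then 1 else 0)) :=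
    fun x1 x2 x3 x4 => Mval μ ψ₀ hψ₀ hinv hd x1 x2 x3 x4
  simp_rw [hM]
  exact halg _ B
end purity

theorem stmt4 {d : ℕ} (hd : 0 < d)
    (μ : Measure (Matrix.unitaryGroup (Fin d) ℂ)) [IsProbabilityMeasure μ]
    (hinv : ∀ U : Matrix.unitaryGroup (Fin d) ℂ, μ.map (fun V => U * V) = μ)
    (ψ₀ : Fin d → ℂ) (hψ₀ : ∑ i, Complex.normSq (ψ₀ i) = 1) :
    (∀ (dl : ℕ) (D : Fin dl → Matrix (Fin d) (Fin d) ℂ),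
      (∀ j, (D j)ᴴ = D j) →
      (∀ j, (D j).trace = 0) →
      (∀ j j', ((D j)ᴴ * D j').trace = if j = j' then 1 else 0) →
      (∫ U : Matrix.unitaryGroup (Fin d) ℂ,
          gfdPurity D (outerProj ((U : Matrix (Fin d) (Fin d) ℂ).mulVec ψ₀)) ∂μ)
        = dl / (d * (d + 1))) ∧
    (∫ U : Matrix.unitaryGroup (Fin d) ℂ,
        gfdPurity (fun _ : Fin 1 => (Real.sqrt d : ℂ)⁻¹ • (1 : Matrix (Fin d) (Fin d) ℂ))
          (outerProj ((U : Matrix (Fin d) (Fin d) ℂ).mulVec ψ₀)) ∂μ)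
      = 1 / d := by
  have hd0R : (0:ℝ) < d := by exact_mod_cast hd
  constructor
  · intro dl D hherm htr hortho
    have hDD : ∀ j : Fin dl, ∑ x1, ∑ x2, (D j) x2 x1 * (starRingEnd ℂ) ((D j) x2 x1) = 1 := by
      intro j
      have h1 := hortho j j
      rw [if_pos rfl] at h1
      calc ∑ x1, ∑ x2, (D j) x2 x1 * (starRingEnd ℂ) ((D j) x2 x1)
          = ((D j)ᴴ * (D j)).trace := by
            rw [Matrix.trace]
            simp only [Matrix.diag, Matrix.mul_apply, Matrix.conjTranspose_apply]
            refine Finset.sum_congr rfl fun x _ => Finset.sum_congr rfl fun y _ => by rw [Complex.star_def]; ring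
        _ = 1 := h1
    have hpt : (fun U : Matrix.unitaryGroup (Fin d) ℂ =>
        gfdPurity D (outerProj ((U : Matrix (Fin d) (Fin d) ℂ).mulVec ψ₀)))
        = fun U => (∑ j, ((D j * outerProj (psiH ψ₀ U)).trace *
          (starRingEnd ℂ) ((D j * outerProj (psiH ψ₀ U)).trace))).re := by
      funext U
      rw [Complex.re_sum]
      refine Finset.sum_congr rfl fun j _ => ?_
      rw [Complex.mul_conj, Complex.ofReal_re]
      rfl
    rw [hpt]
    have hint : Integrable (fun U => ∑ j, ((D j * outerProj (psiH ψ₀ U)).trace *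
        (starRingEnd ℂ) ((D j * outerProj (psiH ψ₀ U)).trace))) μ :=
      integrable_finset_sum _ fun j _ => G_integrable μ ψ₀ hψ₀ (D j)
    have hre := integral_re (μ := μ) hint
    simp only [RCLike.re_to_complex] at hre
    rw [hre, integral_finset_sum _ (fun j _ => G_integrable μ ψ₀ hψ₀ (D j))]
    have hval : ∀ j, ∫ U, ((D j * outerProj (psiH ψ₀ U)).trace *
        (starRingEnd ℂ) ((D j * outerProj (psiH ψ₀ U)).trace)) ∂μ
        = ((d:ℂ) * ((d:ℂ)+1))⁻¹ := by
      intro j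
      rw [purity_int μ ψ₀ hψ₀ hinv hd (D j), htr j, hDD j]
      simp
    simp_rw [hval]
    rw [Finset.sum_const, Finset.card_univ, Fintype.card_fin, nsmul_eq_mul]
    have hcast : ((dl:ℂ) * ((d:ℂ) * ((d:ℂ)+1))⁻¹)
        = (((dl : ℝ) / ((d:ℝ) * ((d:ℝ)+1)) : ℝ) : ℂ) := by
      push_cast
      ring
    rw [hcast, Complex.ofReal_re]
  · have hconst : (fun U : Matrix.unitaryGroup (Fin d) ℂ =>
        gfdPurity (fun _ : Fin 1 => (Real.sqrt d : ℂ)⁻¹ • (1 : Matrix (Fin d) (Fin d) ℂ))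
          (outerProj ((U : Matrix (Fin d) (Fin d) ℂ).mulVec ψ₀)))
        = fun _ => 1 / (d:ℝ) := by
      funext U
      unfold gfdPurity
      rw [Fin.sum_univ_one]
      have htrP : (outerProj (psiH ψ₀ U)).trace = 1 := by
        rw [Matrix.trace]
        simp only [Matrix.diag, outerProj, Matrix.of_apply]
        exact psi_norm_c ψ₀ hψ₀ U
      show Complex.normSq (((Real.sqrt d : ℂ)⁻¹ • (1 : Matrix (Fin d) (Fin d) ℂ)
          * outerProj (psiH ψ₀ U)).trace) = 1 / (d:ℝ)
      rw [Matrix.smul_mul, Matrix.one_mul, Matrix.trace_smul, htrP, smul_eq_mul, mul_one,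
        ← Complex.ofReal_inv, Complex.normSq_ofReal]
      rw [← Real.sqrt_inv]
      rw [Real.mul_self_sqrt (by positivity)]
      rw [one_div]
    rw [hconst, integral_const]
    simp
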